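/- Let Γ ≤ Aff(ℝⁿ) be an n-dimensional crystallographic group with holonomy group F. If the normaliser of F in GLₙ(ℤ) is finite, then the Reidemeister spectrum Spec_R(Γ) = {R(φ) : φ ∈ Aut(Γ)} is a finite subset of ℕ ∪ {∞}. -/

import Mathlib

open Matrix

noncomputable section

@[ext]
structure Aff (n : ℕ) where
  tr : Fin n → ℝ
  lin : GL (Fin n) ℝ

namespace Aff

variable {n : ℕ}

instance : Mul (Aff n) :=
  ⟨fun a b => ⟨a.tr + (a.lin : Matrix (Fin n) (Fin n) ℝ) *ᵥ b.tr, a.lin * b.lin⟩⟩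

instance : One (Aff n) := ⟨⟨0, 1⟩⟩

instance : Inv (Aff n) :=
  ⟨fun a => ⟨((a.lin⁻¹ : GL (Fin n) ℝ) : Matrix (Fin n) (Fin n) ℝ) *ᵥ (-a.tr), a.lin⁻¹⟩⟩

theorem mul_def (a b : Aff n) :
    a * b = ⟨a.tr + (a.lin : Matrix (Fin n) (Fin n) ℝ) *ᵥ b.tr, a.lin * b.lin⟩ := rfl

theorem one_def : (1 : Aff n) = ⟨0, 1⟩ := rfl

theorem inv_def (a : Aff n) :
    a⁻¹ = ⟨((a.lin⁻¹ : GL (Fin n) ℝ) : Matrix (Fin n) (Fin n) ℝ) *ᵥ (-a.tr), a.lin⁻¹⟩ := rfl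

instance : Group (Aff n) where
  mul_assoc a b c := by
    ext i
    · simp [mul_def, Matrix.mulVec_add, Matrix.mulVec_mulVec, add_assoc, Units.val_mul]
    · simp [mul_def, mul_assoc]
  one_mul a := by
    ext i
    · simp [mul_def, one_def]
    · simp [mul_def, one_def]
  mul_one a := by
    ext i
    · simp [mul_def, one_def]
    · simp [mul_def, one_def]
  inv_mul_cancel a := by
    ext i
    · simp [mul_def, inv_def, one_def, Matrix.mulVec_neg]
    · simp [mul_def, inv_def, one_def]

end Aff

/-- The translation subgroup of `Γ` is exactly `ℤⁿ × {Iₙ}`. -/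
def HasIntTranslations {n : ℕ} (Γ : Subgroup (Aff n)) : Prop :=
  ∀ v : Fin n → ℝ, (Aff.mk v 1 ∈ Γ ↔ ∃ z : Fin n → ℤ, v = fun i => (z i : ℝ))

/-- The holonomy group of `Γ`, as the set of linear parts of elements of `Γ`. -/
def holonomy {n : ℕ} (Γ : Subgroup (Aff n)) : Set (GL (Fin n) ℝ) :=
  {D : GL (Fin n) ℝ | ∃ a : Fin n → ℝ, Aff.mk a D ∈ Γ}

/-- `D ∈ GLₙ(ℤ)`: both `D` and `D⁻¹` have integer entries. -/
def IsIntegralGL {n : ℕ} (D : GL (Fin n) ℝ) : Prop :=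
  (∀ i j, ∃ z : ℤ, (D : Matrix (Fin n) (Fin n) ℝ) i j = (z : ℝ)) ∧
  (∀ i j, ∃ z : ℤ, ((D⁻¹ : GL (Fin n) ℝ) : Matrix (Fin n) (Fin n) ℝ) i j = (z : ℝ))

/-- `Γ ≤ Aff(ℝⁿ)` is an `n`-dimensional crystallographic group. -/
def IsCrystallographic {n : ℕ} (Γ : Subgroup (Aff n)) : Prop :=
  HasIntTranslations Γ ∧ (holonomy Γ).Finite ∧ ∀ D ∈ holonomy Γ, IsIntegralGL D

/-- Conjugation by `g` maps `Γ` bijectively onto itself, i.e. `ξ_g` is an automorphism of `Γ`. -/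
def XiIsAut {n : ℕ} (g : Aff n) (Γ : Subgroup (Aff n)) : Prop :=
  ∀ γ : Aff n, γ ∈ Γ ↔ g * γ * g⁻¹ ∈ Γ

def twistedConj {G : Type*} [Group G] (φ : G →* G) (g g' : G) : Prop :=
  ∃ h : G, g = h * g' * (φ h)⁻¹

noncomputable def reidemeisterNumber {G : Type*} [Group G] (φ : G →* G) : ℕ∞ :=
  ENat.card (Quot (twistedConj φ))

noncomputable def reidemeisterSpectrum (G : Type*) [Group G] : Set ℕ∞ :=
  {r : ℕ∞ | ∃ φ : G ≃* G, reidemeisterNumber (φ : G →* G) = r}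

/-- The automorphism `ξ_{(d,D)}` of `Γ`, given by conjugation by `g = (d,D)`. -/
def xi {n : ℕ} (g : Aff n) (Γ : Subgroup (Aff n)) (h : XiIsAut g Γ) : Γ →* Γ where
  toFun x := ⟨g * (x : Aff n) * g⁻¹, (h x).mp x.2⟩
  map_one' := by
    apply Subtype.ext
    show g * ((1 : Γ) : Aff n) * g⁻¹ = ((1 : Γ) : Aff n)
    simp
  map_mul' x y := by
    apply Subtype.ext
    show g * ((x * y : Γ) : Aff n) * g⁻¹ =
      (g * (x : Aff n) * g⁻¹) * (g * (y : Aff n) * g⁻¹)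
    simp only [Subgroup.coe_mul]
    group

/-- `|x|_∞` for an integer `x`. -/
def intAbsInfty (x : ℤ) : ℕ∞ := if x = 0 then ⊤ else (x.natAbs : ℕ∞)

/-- `O(B,b)`: the number of solutions over `ℤ/2ℤ` of `B̄ x = b̄`. -/
noncomputable def Ocount {n : ℕ} (B : Matrix (Fin n) (Fin n) ℤ) (b : Fin n → ℤ) : ℕ :=
  Nat.card {x : Fin n → ZMod 2 // (B.map (Int.cast : ℤ → ZMod 2)) *ᵥ x = fun i => ((b i : ZMod 2))}

namespace Crys

variable {n : ℕ}

/-- translation element of `Aff n`. -/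
def tl (v : Fin n → ℝ) : Aff n := ⟨v, 1⟩

def castZ (z : Fin n → ℤ) : Fin n → ℝ := fun i => (z i : ℝ)

lemma castZ_add (z w : Fin n → ℤ) : castZ (z + w) = castZ z + castZ w := by
  funext i; simp [castZ]

lemma tl_mul (v w : Fin n → ℝ) : tl v * tl w = tl (v + w) := by
  ext i
  · simp [tl, Aff.mul_def, Units.val_one, Matrix.one_mulVec]
  · simp [tl, Aff.mul_def]

lemma tl_comm (v w : Fin n → ℝ) : tl v * tl w = tl w * tl v := by
  rw [tl_mul, tl_mul, add_comm]

lemma tl_pow (v : Fin n → ℝ) (k : ℕ) : (tl v) ^ k = tl ((k : ℝ) • v) := by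
  induction k with
  | zero => simp only [pow_zero, Nat.cast_zero, zero_smul]; rfl
  | succ k ih =>
    rw [pow_succ, ih, tl_mul]
    congr 1
    push_cast
    rw [add_smul, one_smul]

/-- the linear part as a group hom. -/
def linH : Aff n →* GL (Fin n) ℝ where
  toFun := Aff.lin
  map_one' := rfl
  map_mul' _ _ := rfl


@[simp] lemma GL_mul_inv_val (A : GL (Fin n) ℝ) :
    (A : Matrix (Fin n) (Fin n) ℝ) * (A : Matrix (Fin n) (Fin n) ℝ)⁻¹ = 1 := by
  rw [← Matrix.coe_units_inv, ← Units.val_mul, mul_inv_cancel, Units.val_one]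

@[simp] lemma GL_inv_mul_val (A : GL (Fin n) ℝ) :
    (A : Matrix (Fin n) (Fin n) ℝ)⁻¹ * (A : Matrix (Fin n) (Fin n) ℝ) = 1 := by
  rw [← Matrix.coe_units_inv, ← Units.val_mul, inv_mul_cancel, Units.val_one]

lemma comm_tl {g : Aff n} {v : Fin n → ℝ} (h : g * tl v = tl v * g) :
    (g.lin : Matrix (Fin n) (Fin n) ℝ) *ᵥ v = v := by
  have h1 := congrArg Aff.tr h
  simp only [tl, Aff.mul_def, Units.val_one, Matrix.one_mulVec] at h1
  have : g.tr + (g.lin : Matrix (Fin n) (Fin n) ℝ) *ᵥ v = g.tr + v := by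
    rw [h1]; rw [add_comm]
  exact add_left_cancel this

lemma conj_tl (g : Aff n) (v : Fin n → ℝ) :
    g * tl v * g⁻¹ = tl ((g.lin : Matrix (Fin n) (Fin n) ℝ) *ᵥ v) := by
  ext i
  · simp [tl, Aff.mul_def, Aff.inv_def, Matrix.mulVec_add, Matrix.mulVec_mulVec,
      Units.val_mul, Matrix.mulVec_neg]
  · simp [tl, Aff.mul_def, Aff.inv_def]

lemma tl_conj (v : Fin n → ℝ) (g : Aff n) :
    tl v * g * (tl v)⁻¹ =
      ⟨v + g.tr - (g.lin : Matrix (Fin n) (Fin n) ℝ) *ᵥ v, g.lin⟩ := by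
  ext i
  · simp [tl, Aff.mul_def, Aff.inv_def, Matrix.mulVec_add, Matrix.mulVec_mulVec,
      Units.val_mul, Matrix.mulVec_neg, Units.val_one, Matrix.one_mulVec, sub_eq_add_neg,
      add_assoc]
  · simp [tl, Aff.mul_def, Aff.inv_def]

lemma mul_inv_tl {a b : Aff n} (h : a.lin = b.lin) :
    a * b⁻¹ = tl (a.tr - b.tr) := by
  ext i
  · simp [tl, Aff.mul_def, Aff.inv_def, h, Matrix.mulVec_mulVec, Matrix.mulVec_neg,
      Units.val_mul, sub_eq_add_neg]
  · simp [tl, Aff.mul_def, Aff.inv_def, h]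

lemma eq_one_of_mulVec_single {B : Matrix (Fin n) (Fin n) ℝ}
    (h : ∀ j, B *ᵥ Pi.single j 1 = Pi.single j 1) : B = 1 := by
  ext i j
  have := congrFun (h j) i
  simp only [Matrix.mulVec_single, mul_one, MulOpposite.op_one, one_smul, Matrix.col_apply] at this
  rw [this]
  simp [Matrix.one_apply, Pi.single_apply, eq_comm]

lemma matrix_eq_of_single {M N : Matrix (Fin n) (Fin n) ℝ}
    (h : ∀ j, M *ᵥ Pi.single j 1 = N *ᵥ Pi.single j 1) : M = N := by
  ext i j
  have := congrFun (h j) i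
  simpa using this

variable (Γ : Subgroup (Aff n))

/-- the holonomy as a subgroup of `GL n ℝ`. -/
def Fgrp : Subgroup (GL (Fin n) ℝ) where
  carrier := holonomy Γ
  one_mem' := ⟨0, Γ.one_mem⟩
  mul_mem' := by
    rintro A B ⟨a, ha⟩ ⟨b, hb⟩
    exact ⟨a + (A : Matrix (Fin n) (Fin n) ℝ) *ᵥ b, Γ.mul_mem ha hb⟩
  inv_mem' := by
    rintro A ⟨a, ha⟩
    exact ⟨((A⁻¹ : GL (Fin n) ℝ) : Matrix (Fin n) (Fin n) ℝ) *ᵥ (-a), Γ.inv_mem ha⟩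

/-- the order of the holonomy group. -/
def mF : ℕ := Nat.card ↥(Fgrp Γ)

lemma lin_mem {γ : Aff n} (hγ : γ ∈ Γ) : γ.lin ∈ holonomy Γ := ⟨γ.tr, hγ⟩

variable {Γ} (hΓ : IsCrystallographic Γ)
include hΓ

lemma finF : Finite ↥(Fgrp Γ) := hΓ.2.1.to_subtype

lemma mF_pos : 0 < mF Γ := by
  haveI := finF hΓ
  exact Nat.card_pos

lemma mF_ne_zero : ((mF Γ : ℝ)) ≠ 0 := by
  exact Nat.cast_ne_zero.mpr (mF_pos hΓ).ne'

lemma pow_mF {A : GL (Fin n) ℝ} (hA : A ∈ holonomy Γ) : A ^ mF Γ = 1 := by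
  haveI := finF hΓ
  have h1 : (⟨A, hA⟩ : Fgrp Γ) ^ mF Γ = 1 := pow_card_eq_one'
  have h2 := congrArg (Subtype.val : Fgrp Γ → GL (Fin n) ℝ) h1
  simpa using h2

lemma pow_mF_tl {γ : Aff n} (hγ : γ ∈ Γ) :
    ∃ z : Fin n → ℤ, γ ^ mF Γ = tl (castZ z) := by
  have hl : (γ ^ mF Γ).lin = 1 := by
    have h1 : linH (γ ^ mF Γ) = (linH γ) ^ mF Γ := map_pow linH γ (mF Γ)
    have h2 : (γ ^ mF Γ).lin = γ.lin ^ mF Γ := h1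
    rw [h2, pow_mF hΓ (lin_mem Γ hγ)]
  have heq : γ ^ mF Γ = tl ((γ ^ mF Γ).tr) := by
    exact Aff.ext rfl hl
  have hmem : Aff.mk ((γ ^ mF Γ).tr) 1 ∈ Γ := by
    have := Γ.pow_mem hγ (mF Γ)
    rwa [heq] at this
  obtain ⟨z, hz⟩ := (hΓ.1 _).mp hmem
  exact ⟨z, by rwa [hz] at heq⟩

lemma basis_mem (j : Fin n) : Aff.mk (castZ (Pi.single j 1)) 1 ∈ Γ :=
  (hΓ.1 _).mpr ⟨Pi.single j 1, rfl⟩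

omit hΓ in
lemma castZ_single (j : Fin n) : castZ (Pi.single j (1 : ℤ)) = Pi.single j (1 : ℝ) := by
  funext i
  by_cases h : i = j <;> simp [castZ, Pi.single_apply, h]

/-- automorphisms of `Γ` map translations to translations. -/
lemma lin_image_one (φ : Γ ≃* Γ) {x : Γ} (hx : (x : Aff n).lin = 1) :
    ((φ x : Γ) : Aff n).lin = 1 := by
  apply Units.ext
  show (((φ x : Γ) : Aff n).lin : Matrix (Fin n) (Fin n) ℝ) = 1
  apply eq_one_of_mulVec_single
  intro j
  set c : Fin n → ℝ := castZ (Pi.single j 1) with hc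
  have hbj : Aff.mk c 1 ∈ Γ := basis_mem hΓ j
  set bj : Γ := ⟨tl c, hbj⟩ with hbj'
  set η : Γ := φ.symm bj with hη
  obtain ⟨w, hw⟩ := pow_mF_tl hΓ η.2
  have hcomm : x * η ^ mF Γ = η ^ mF Γ * x := by
    apply Subtype.ext
    have hxv : (x : Aff n) = tl ((x : Aff n).tr) := Aff.ext rfl hx
    show (x : Aff n) * ((η ^ mF Γ : Γ) : Aff n) = ((η ^ mF Γ : Γ) : Aff n) * (x : Aff n)
    rw [SubmonoidClass.coe_pow, hw, hxv, tl_comm]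
  have himg := congrArg φ hcomm
  rw [_root_.map_mul, _root_.map_mul, map_pow, hη, MulEquiv.apply_symm_apply] at himg
  have hval := congrArg (Subtype.val : Γ → Aff n) himg
  simp only [Subgroup.coe_mul, SubmonoidClass.coe_pow] at hval
  rw [tl_pow] at hval
  have key := comm_tl hval
  rw [Matrix.mulVec_smul] at key
  have hcancel : (((φ x : Γ) : Aff n).lin : Matrix (Fin n) (Fin n) ℝ) *ᵥ c = c := by
    have := smul_right_injective (Fin n → ℝ) (mF_ne_zero hΓ) key
    exact this
  rw [hc, castZ_single] at hcancel
  rw [hcancel]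

omit hΓ in
lemma single_zsmul (j : Fin n) (k : ℤ) :
    (Pi.single j k : Fin n → ℤ) = k • (Pi.single j (1 : ℤ) : Fin n → ℤ) := by
  funext i
  by_cases h : i = j <;> simp [Pi.single_apply, h]

lemma trz_mem (z : Fin n → ℤ) : Aff.mk (castZ z) 1 ∈ Γ := (hΓ.1 _).mpr ⟨z, rfl⟩

/-- the translation by `z ∈ ℤⁿ` as an element of `Γ`. -/
def trz (z : Fin n → ℤ) : Γ := ⟨tl (castZ z), trz_mem hΓ z⟩

lemma trz_lin (z : Fin n → ℤ) : ((trz hΓ z : Γ) : Aff n).lin = 1 := rfl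

lemma trz_mul (z w : Fin n → ℤ) : trz hΓ z * trz hΓ w = trz hΓ (z + w) :=
  Subtype.ext (by
    show tl (castZ z) * tl (castZ w) = tl (castZ (z + w))
    rw [tl_mul, castZ_add])

/-- the integer matrix through which an automorphism acts on the translations. -/
def Dmat (φ : Γ ≃* Γ) : Matrix (Fin n) (Fin n) ℝ :=
  fun i j => ((φ (trz hΓ (Pi.single j 1)) : Γ) : Aff n).tr i

lemma image_tl (φ : Γ ≃* Γ) (x : Γ) (hx : (x : Aff n).lin = 1) :
    ((φ x : Γ) : Aff n) = tl (Dmat hΓ φ *ᵥ (x : Aff n).tr) := by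
  have hmem : Aff.mk ((x : Aff n).tr) 1 ∈ Γ := by
    have hx2 := x.2
    rw [show (x : Aff n) = Aff.mk ((x : Aff n).tr) 1 from Aff.ext rfl hx] at hx2
    exact hx2
  obtain ⟨z, hz⟩ := (hΓ.1 _).mp hmem
  have hxz : x = trz hΓ z := Subtype.ext (Aff.ext hz hx)
  set f : (Fin n → ℤ) → (Fin n → ℝ) := fun w => ((φ (trz hΓ w) : Γ) : Aff n).tr with hf
  have hadd : ∀ w w', f (w + w') = f w + f w' := by
    intro w w'
    have h1 : φ (trz hΓ (w + w')) = φ (trz hΓ w) * φ (trz hΓ w') := by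
      rw [← _root_.map_mul, trz_mul]
    have h2 := congrArg (fun y : Γ => ((y : Γ) : Aff n).tr) h1
    simp only [Subgroup.coe_mul] at h2
    rw [hf]
    show ((φ (trz hΓ (w + w')) : Γ) : Aff n).tr = _
    rw [h2]
    show (((φ (trz hΓ w) : Γ) : Aff n)).tr
        + (((φ (trz hΓ w) : Γ) : Aff n)).lin.val *ᵥ (((φ (trz hΓ w') : Γ) : Aff n)).tr = _
    rw [lin_image_one hΓ φ (trz_lin hΓ w), Units.val_one, Matrix.one_mulVec]
  set F : (Fin n → ℤ) →+ (Fin n → ℝ) := AddMonoidHom.mk' f hadd with hF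
  have hfz : f z = Dmat hΓ φ *ᵥ castZ z := by
    have hdec : z = ∑ j, Pi.single j (z j) := (Finset.univ_sum_single z).symm
    have h1 : F z = ∑ j, (z j) • F (Pi.single j 1) := by
      conv_lhs => rw [hdec]
      rw [map_sum]
      refine Finset.sum_congr rfl (fun j _ => ?_)
      rw [single_zsmul j (z j), map_zsmul]
    funext i
    have h2 := congrFun h1 i
    show F z i = _
    rw [h2]
    simp only [Finset.sum_apply, Pi.smul_apply]
    show ∑ j, z j • (f (Pi.single j 1) i) = (Dmat hΓ φ *ᵥ castZ z) i
    simp only [Matrix.mulVec, dotProduct, castZ]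
    refine Finset.sum_congr rfl (fun j _ => ?_)
    rw [zsmul_eq_mul, mul_comm]
    rfl
  rw [hxz]
  refine Aff.ext ?_ (lin_image_one hΓ φ (trz_lin hΓ z))
  show f z = (tl (Dmat hΓ φ *ᵥ ((trz hΓ z : Γ) : Aff n).tr)).tr
  rw [hfz]
  rfl

lemma Dmat_entry_int (φ : Γ ≃* Γ) (i j : Fin n) : ∃ k : ℤ, Dmat hΓ φ i j = k := by
  have hlin := lin_image_one hΓ φ (trz_lin hΓ (Pi.single j 1))
  have hmem : Aff.mk (((φ (trz hΓ (Pi.single j 1)) : Γ) : Aff n).tr) 1 ∈ Γ := by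
    have h2 := (φ (trz hΓ (Pi.single j 1))).2
    rwa [show ((φ (trz hΓ (Pi.single j 1)) : Γ) : Aff n)
        = Aff.mk (((φ (trz hΓ (Pi.single j 1)) : Γ) : Aff n).tr) 1 from Aff.ext rfl hlin] at h2
  obtain ⟨w, hw⟩ := (hΓ.1 _).mp hmem
  exact ⟨w i, congrFun hw i⟩

lemma Dmat_symm_mul (φ : Γ ≃* Γ) : Dmat hΓ φ.symm * Dmat hΓ φ = 1 := by
  apply eq_one_of_mulVec_single
  intro j
  have h1 := image_tl hΓ φ (trz hΓ (Pi.single j 1)) (trz_lin hΓ _)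
  have hlin := lin_image_one hΓ φ (trz_lin hΓ (Pi.single j 1))
  have h2 := image_tl hΓ φ.symm (φ (trz hΓ (Pi.single j 1))) hlin
  rw [MulEquiv.symm_apply_apply] at h2
  have htr : ((φ (trz hΓ (Pi.single j 1)) : Γ) : Aff n).tr
      = Dmat hΓ φ *ᵥ castZ (Pi.single j 1) := congrArg Aff.tr h1
  have h3 := congrArg Aff.tr h2
  rw [htr, Matrix.mulVec_mulVec] at h3
  have h4 : castZ (Pi.single j 1)
      = (Dmat hΓ φ.symm * Dmat hΓ φ) *ᵥ castZ (Pi.single j 1) := h3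
  rw [castZ_single] at h4
  exact h4.symm

lemma Dmat_mul_symm (φ : Γ ≃* Γ) : Dmat hΓ φ * Dmat hΓ φ.symm = 1 := by
  have := Dmat_symm_mul hΓ φ.symm
  rwa [MulEquiv.symm_symm] at this

/-- the induced matrix as an element of `GL n ℝ`. -/
def DGL (φ : Γ ≃* Γ) : GL (Fin n) ℝ :=
  ⟨Dmat hΓ φ, Dmat hΓ φ.symm, Dmat_mul_symm hΓ φ, Dmat_symm_mul hΓ φ⟩

lemma DGL_val (φ : Γ ≃* Γ) : (DGL hΓ φ : Matrix (Fin n) (Fin n) ℝ) = Dmat hΓ φ := rfl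

lemma DGL_inv_val (φ : Γ ≃* Γ) :
    (((DGL hΓ φ)⁻¹ : GL (Fin n) ℝ) : Matrix (Fin n) (Fin n) ℝ) = Dmat hΓ φ.symm := rfl

lemma DGL_symm (φ : Γ ≃* Γ) : DGL hΓ φ.symm = (DGL hΓ φ)⁻¹ := Units.ext rfl

lemma lin_conj (φ : Γ ≃* Γ) (x : Γ) :
    ((φ x : Γ) : Aff n).lin = DGL hΓ φ * (x : Aff n).lin * (DGL hΓ φ)⁻¹ := by
  set A := (x : Aff n).lin with hA
  set A' := ((φ x : Γ) : Aff n).lin with hA'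
  have key : (A' : Matrix (Fin n) (Fin n) ℝ) * Dmat hΓ φ
      = Dmat hΓ φ * (A : Matrix (Fin n) (Fin n) ℝ) := by
    apply matrix_eq_of_single
    intro j
    set t : Γ := trz hΓ (Pi.single j 1) with ht
    have hwval : ((x * t * x⁻¹ : Γ) : Aff n)
        = tl ((A : Matrix (Fin n) (Fin n) ℝ) *ᵥ castZ (Pi.single j 1)) := by
      simp only [Subgroup.coe_mul, Subgroup.coe_inv]
      exact conj_tl (x : Aff n) (castZ (Pi.single j 1))
    have hwlin : ((x * t * x⁻¹ : Γ) : Aff n).lin = 1 := by rw [hwval]; rfl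
    have h1 := image_tl hΓ φ (x * t * x⁻¹) hwlin
    have h2 : φ (x * t * x⁻¹) = φ x * φ t * (φ x)⁻¹ := by
      rw [_root_.map_mul, _root_.map_mul, map_inv]
    rw [h2] at h1
    have h3 := congrArg Aff.tr h1
    have hlhs : ((φ x * φ t * (φ x)⁻¹ : Γ) : Aff n).tr
        = (A' : Matrix (Fin n) (Fin n) ℝ) *ᵥ (Dmat hΓ φ *ᵥ castZ (Pi.single j 1)) := by
      have hforms : ((φ x * φ t * (φ x)⁻¹ : Γ) : Aff n)
          = (φ x : Aff n) * ((φ t : Γ) : Aff n) * ((φ x : Γ) : Aff n)⁻¹ := by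
        simp only [Subgroup.coe_mul, Subgroup.coe_inv]
      rw [hforms, image_tl hΓ φ t (trz_lin hΓ _), conj_tl]
      rfl
    rw [hlhs] at h3
    have hrhs : (tl (Dmat hΓ φ *ᵥ ((x * t * x⁻¹ : Γ) : Aff n).tr)).tr
        = Dmat hΓ φ *ᵥ ((A : Matrix (Fin n) (Fin n) ℝ) *ᵥ castZ (Pi.single j 1)) := by
      rw [hwval]
      rfl
    rw [hrhs] at h3
    rw [Matrix.mulVec_mulVec, Matrix.mulVec_mulVec, castZ_single] at h3
    exact h3
  apply Units.ext
  show (A' : Matrix (Fin n) (Fin n) ℝ) = _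
  have : (A' : Matrix (Fin n) (Fin n) ℝ)
      = (Dmat hΓ φ * (A : Matrix (Fin n) (Fin n) ℝ)) * Dmat hΓ φ.symm := by
    rw [← key, Matrix.mul_assoc, Dmat_mul_symm hΓ φ, Matrix.mul_one]
  rw [this]
  show _ = (DGL hΓ φ * A * (DGL hΓ φ)⁻¹ : GL (Fin n) ℝ).val
  rw [Units.val_mul, Units.val_mul, DGL_val, DGL_inv_val]

lemma DGL_mem_hol (φ : Γ ≃* Γ) {A : GL (Fin n) ℝ} (hA : A ∈ holonomy Γ) :
    DGL hΓ φ * A * (DGL hΓ φ)⁻¹ ∈ holonomy Γ := by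
  obtain ⟨a, ha⟩ := hA
  set γ : Γ := ⟨Aff.mk a A, ha⟩ with hγ
  have hlin : ((γ : Γ) : Aff n).lin = A := rfl
  have := lin_conj hΓ φ γ
  rw [hlin] at this
  rw [← this]
  exact lin_mem Γ (φ γ).2

lemma DGL_normalizes (φ : Γ ≃* Γ) (A : GL (Fin n) ℝ) :
    A ∈ holonomy Γ ↔ DGL hΓ φ * A * (DGL hΓ φ)⁻¹ ∈ holonomy Γ := by
  constructor
  · exact DGL_mem_hol hΓ φ
  · intro h
    have h2 := DGL_mem_hol hΓ φ.symm h
    rw [DGL_symm] at h2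
    have h3 : (DGL hΓ φ)⁻¹ * (DGL hΓ φ * A * (DGL hΓ φ)⁻¹) * ((DGL hΓ φ)⁻¹)⁻¹ = A := by
      group
    rwa [h3] at h2

lemma DGL_integral (φ : Γ ≃* Γ) : IsIntegralGL (DGL hΓ φ) := by
  constructor
  · intro i j
    obtain ⟨k, hk⟩ := Dmat_entry_int hΓ φ i j
    exact ⟨k, by rw [DGL_val]; exact hk⟩
  · intro i j
    obtain ⟨k, hk⟩ := Dmat_entry_int hΓ φ.symm i j
    exact ⟨k, by rw [DGL_inv_val]; exact hk⟩

omit hΓ in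
lemma coe_mul_tr (x y : Γ) :
    ((x * y : Γ) : Aff n).tr
      = (x : Aff n).tr + ((x : Aff n).lin : Matrix (Fin n) (Fin n) ℝ) *ᵥ (y : Aff n).tr := by
  rfl

/-- displacement of an automorphism. -/
def cfun (ψ : Γ ≃* Γ) (x : Γ) : Fin n → ℝ := ((ψ x : Γ) : Aff n).tr - (x : Aff n).tr

omit hΓ in
lemma cfun_def (ψ : Γ ≃* Γ) (x : Γ) :
    cfun ψ x = ((ψ x : Γ) : Aff n).tr - (x : Aff n).tr := rfl

omit hΓ in
lemma mem_hol_of_Fgrp {A : GL (Fin n) ℝ} (h : A ∈ Fgrp Γ) : A ∈ holonomy Γ := h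

variable {ψ : Γ ≃* Γ}

lemma DGL_eq_one (hD : Dmat hΓ ψ = 1) : DGL hΓ ψ = 1 :=
  Units.ext (by rw [DGL_val, hD]; rfl)

lemma ker_lin (hD : Dmat hΓ ψ = 1) (x : Γ) :
    ((ψ x : Γ) : Aff n).lin = (x : Aff n).lin := by
  rw [lin_conj hΓ ψ x, DGL_eq_one hΓ hD]
  simp

lemma ker_fix_tl (hD : Dmat hΓ ψ = 1) {x : Γ} (hx : (x : Aff n).lin = 1) : ψ x = x := by
  apply Subtype.ext
  rw [image_tl hΓ ψ x hx, hD, Matrix.one_mulVec]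
  symm
  exact Aff.ext rfl hx

lemma cfun_int (hD : Dmat hΓ ψ = 1) (x : Γ) : ∃ w : Fin n → ℤ, cfun ψ x = castZ w := by
  have hlin := ker_lin hΓ hD x
  have hval : ((ψ x * x⁻¹ : Γ) : Aff n) = tl (cfun ψ x) := by
    simp only [Subgroup.coe_mul, Subgroup.coe_inv]
    exact mul_inv_tl hlin
  have hmem := (ψ x * x⁻¹ : Γ).2
  rw [hval] at hmem
  obtain ⟨w, hw⟩ := (hΓ.1 _).mp hmem
  exact ⟨w, hw⟩

lemma cfun_dep (hD : Dmat hΓ ψ = 1) {x y : Γ}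
    (h : (x : Aff n).lin = (y : Aff n).lin) : cfun ψ x = cfun ψ y := by
  set t : Γ := x * y⁻¹ with ht
  have htval : ((t : Γ) : Aff n) = tl ((x : Aff n).tr - (y : Aff n).tr) := by
    rw [ht]
    simp only [Subgroup.coe_mul, Subgroup.coe_inv]
    exact mul_inv_tl h
  have htlin : ((t : Γ) : Aff n).lin = 1 := by rw [htval]; rfl
  have hxy : x = t * y := by rw [ht]; group
  have hψx : ψ x = t * ψ y := by rw [hxy, _root_.map_mul, ker_fix_tl hΓ hD htlin]
  have e1 : ((ψ x : Γ) : Aff n).tr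
      = ((x : Aff n).tr - (y : Aff n).tr) + ((ψ y : Γ) : Aff n).tr := by
    rw [hψx, coe_mul_tr, htval]
    show ((x : Aff n).tr - (y : Aff n).tr)
        + ((1 : GL (Fin n) ℝ) : Matrix (Fin n) (Fin n) ℝ) *ᵥ _ = _
    rw [Units.val_one, Matrix.one_mulVec]
  have e2 : ((x : Aff n).tr : Fin n → ℝ) = ((x : Aff n).tr - (y : Aff n).tr) + (y : Aff n).tr := by
    abel
  show ((ψ x : Γ) : Aff n).tr - (x : Aff n).tr = _
  rw [e1]
  nth_rewrite 1 [e2]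
  show _ = ((ψ y : Γ) : Aff n).tr - (y : Aff n).tr
  abel

lemma cfun_cocycle (hD : Dmat hΓ ψ = 1) (x y : Γ) :
    cfun ψ (x * y)
      = cfun ψ x + ((x : Aff n).lin : Matrix (Fin n) (Fin n) ℝ) *ᵥ cfun ψ y := by
  have h1 : ((ψ (x * y) : Γ) : Aff n).tr
      = ((ψ x : Γ) : Aff n).tr
        + ((x : Aff n).lin : Matrix (Fin n) (Fin n) ℝ) *ᵥ ((ψ y : Γ) : Aff n).tr := by
    rw [_root_.map_mul, coe_mul_tr, ker_lin hΓ hD x]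
  simp only [cfun_def]
  rw [h1, coe_mul_tr, Matrix.mulVec_sub]
  abel

/-- the holonomy as a finset. -/
def SF : Finset (GL (Fin n) ℝ) := hΓ.2.1.toFinset

lemma mem_SF {A : GL (Fin n) ℝ} : A ∈ SF hΓ ↔ A ∈ holonomy Γ := Set.Finite.mem_toFinset _

lemma card_SF : (SF hΓ).card = mF Γ := by
  have h1 : mF Γ = Nat.card ↥(holonomy Γ) :=
    Nat.card_congr (Equiv.subtypeEquivRight (fun x => ⟨fun h => h, fun h => h⟩))
  rw [h1, Nat.card_coe_set_eq, Set.ncard_eq_toFinset_card _ hΓ.2.1]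
  rfl

omit hΓ in
/-- a chosen representative in `Γ` with given linear part. -/
noncomputable def crep (A : GL (Fin n) ℝ) : Γ :=
  letI := Classical.dec (A ∈ holonomy Γ)
  if h : A ∈ holonomy Γ then ⟨Aff.mk h.choose A, h.choose_spec⟩ else 1

omit hΓ in
lemma crep_lin {A : GL (Fin n) ℝ} (hA : A ∈ holonomy Γ) :
    ((crep (Γ := Γ) A : Γ) : Aff n).lin = A := by
  rw [crep]
  simp only [hA, dif_pos]

/-- the sum of the translation parts of the images of the chosen representatives. -/
noncomputable def uSum (φ : Γ ≃* Γ) : Fin n → ℝ :=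
  ∑ A ∈ SF hΓ, ((φ (crep A) : Γ) : Aff n).tr

/-- the sum of the displacement cocycle over the holonomy group. -/
noncomputable def Zsum (ψ : Γ ≃* Γ) : Fin n → ℝ :=
  ∑ A ∈ SF hΓ, cfun ψ (crep A)

lemma Zsum_eq (φ φ' : Γ ≃* Γ) (ψ : Γ ≃* Γ) (hψ : ∀ x, ψ (φ x) = φ' x) :
    uSum hΓ φ' - uSum hΓ φ = ∑ A ∈ SF hΓ, cfun ψ (φ (crep A)) := by
  rw [uSum, uSum, ← Finset.sum_sub_distrib]
  refine Finset.sum_congr rfl (fun A _ => ?_)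
  rw [cfun_def, hψ]

lemma sum_cfun_reindex (hD : Dmat hΓ ψ = 1) {B : GL (Fin n) ℝ} (hB : B ∈ holonomy Γ)
    (hmein : ∀ A ∈ holonomy Γ, B * A ∈ holonomy Γ)
    (hmeout : ∀ A ∈ holonomy Γ, B⁻¹ * A ∈ holonomy Γ) :
    ∑ A ∈ SF hΓ, cfun ψ (crep (B * A)) = Zsum hΓ ψ := by
  rw [Zsum]
  refine Finset.sum_bij' (fun A _ => B * A) (fun A _ => B⁻¹ * A) ?_ ?_ ?_ ?_ ?_
  · intro A hA
    exact (mem_SF hΓ).mpr (hmein A ((mem_SF hΓ).mp hA))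
  · intro A hA
    exact (mem_SF hΓ).mpr (hmeout A ((mem_SF hΓ).mp hA))
  · intro A _
    group
  · intro A _
    group
  · intro A _
    rfl

/-- the averaging identity: `m · c(x) = Z - lin(x) Z`. -/
lemma key_averaging (hD : Dmat hΓ ψ = 1) (x : Γ) :
    (mF Γ : ℝ) • cfun ψ x
      = Zsum hΓ ψ - ((x : Aff n).lin : Matrix (Fin n) (Fin n) ℝ) *ᵥ Zsum hΓ ψ := by
  have hxlin : (x : Aff n).lin ∈ holonomy Γ := lin_mem Γ x.2
  have hsum2 : ∑ A ∈ SF hΓ, cfun ψ (x * crep A) = Zsum hΓ ψ := by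
    have heach : ∀ A ∈ SF hΓ, cfun ψ (x * crep A) = cfun ψ (crep ((x : Aff n).lin * A)) := by
      intro A hA
      apply cfun_dep hΓ hD
      have h1 : ((x * crep A : Γ) : Aff n).lin = (x : Aff n).lin * A := by
        have : ((x * crep A : Γ) : Aff n).lin
            = (x : Aff n).lin * ((crep A : Γ) : Aff n).lin := rfl
        rw [this, crep_lin ((mem_SF hΓ).mp hA)]
      rw [h1, crep_lin (mem_hol_of_Fgrp ((Fgrp Γ).mul_mem hxlin ((mem_SF hΓ).mp hA)))]
    rw [Finset.sum_congr rfl heach]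
    exact sum_cfun_reindex hΓ hD hxlin
      (fun A hA => mem_hol_of_Fgrp ((Fgrp Γ).mul_mem hxlin hA))
      (fun A hA => mem_hol_of_Fgrp ((Fgrp Γ).mul_mem ((Fgrp Γ).inv_mem hxlin) hA))
  have hsum1 : ∑ A ∈ SF hΓ, cfun ψ (x * crep A)
      = (SF hΓ).card • cfun ψ x
        + ((x : Aff n).lin : Matrix (Fin n) (Fin n) ℝ) *ᵥ Zsum hΓ ψ := by
    have heach : ∀ A ∈ SF hΓ, cfun ψ (x * crep A)
        = cfun ψ x + ((x : Aff n).lin : Matrix (Fin n) (Fin n) ℝ) *ᵥ cfun ψ (crep A) :=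
      fun A _ => cfun_cocycle hΓ hD x (crep A)
    rw [Finset.sum_congr rfl heach, Finset.sum_add_distrib, Finset.sum_const]
    congr 1
    rw [Zsum]
    have : ∀ v : Fin n → ℝ, ((x : Aff n).lin : Matrix (Fin n) (Fin n) ℝ) *ᵥ v
        = ((x : Aff n).lin : Matrix (Fin n) (Fin n) ℝ).mulVecLin v := fun _ => rfl
    rw [this, map_sum]
    refine Finset.sum_congr rfl (fun A _ => rfl)
  rw [hsum2, card_SF hΓ] at hsum1
  rw [Nat.cast_smul_eq_nsmul, eq_sub_iff_add_eq]
  exact hsum1.symm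

/-- the lattice of integer vectors. -/
def Lat : AddSubgroup (Fin n → ℝ) where
  carrier := {v | ∃ w : Fin n → ℤ, v = castZ w}
  zero_mem' := ⟨0, by funext i; simp [castZ]⟩
  add_mem' := by
    rintro _ _ ⟨a, rfl⟩ ⟨b, rfl⟩
    exact ⟨a + b, (castZ_add a b).symm⟩
  neg_mem' := by
    rintro _ ⟨a, rfl⟩
    exact ⟨-a, by funext i; simp [castZ]⟩

/-- the lattice `m ℤⁿ`. -/
def mLat (m : ℕ) : AddSubgroup (Fin n → ℝ) where
  carrier := {v | ∃ w : Fin n → ℤ, v = (m : ℝ) • castZ w}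
  zero_mem' := ⟨0, by funext i; simp [castZ]⟩
  add_mem' := by
    rintro _ _ ⟨a, rfl⟩ ⟨b, rfl⟩
    exact ⟨a + b, by rw [castZ_add, smul_add]⟩
  neg_mem' := by
    rintro _ ⟨a, rfl⟩
    refine ⟨-a, ?_⟩
    have : castZ (-a) = -castZ a := by funext i; simp [castZ]
    rw [this, smul_neg]

lemma Zsum_int (hD : Dmat hΓ ψ = 1) : ∃ w : Fin n → ℤ, Zsum hΓ ψ = castZ w := by
  have : Zsum hΓ ψ ∈ Lat (n := n) :=
    sum_mem (fun A _ => cfun_int hΓ hD (crep A))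
  exact this

lemma kernel_inner (hD : Dmat hΓ ψ = 1) (z : Fin n → ℤ)
    (hc : ∀ x : Γ, cfun ψ x
      = castZ z - ((x : Aff n).lin : Matrix (Fin n) (Fin n) ℝ) *ᵥ castZ z) :
    ∀ x : Γ, ψ x = trz hΓ z * x * (trz hΓ z)⁻¹ := by
  intro x
  apply Subtype.ext
  have hval : ((trz hΓ z * x * (trz hΓ z)⁻¹ : Γ) : Aff n)
      = ⟨castZ z + (x : Aff n).tr
          - ((x : Aff n).lin : Matrix (Fin n) (Fin n) ℝ) *ᵥ castZ z, (x : Aff n).lin⟩ := by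
    simp only [Subgroup.coe_mul, Subgroup.coe_inv]
    exact tl_conj (castZ z) (x : Aff n)
  rw [hval]
  refine Aff.ext ?_ (ker_lin hΓ hD x)
  have h1 := hc x
  rw [cfun_def] at h1
  have h2 : ((ψ x : Γ) : Aff n).tr = (x : Aff n).tr
      + (castZ z - ((x : Aff n).lin : Matrix (Fin n) (Fin n) ℝ) *ᵥ castZ z) := by
    rw [← h1]; abel
  rw [h2]
  show _ = castZ z + (x : Aff n).tr
      - ((x : Aff n).lin : Matrix (Fin n) (Fin n) ℝ) *ᵥ castZ z
  abel

lemma Dmat_comp_one {φ φ' : Γ ≃* Γ} (hDD : Dmat hΓ φ' = Dmat hΓ φ) :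
    Dmat hΓ (φ.symm.trans φ') = 1 := by
  funext i j
  set ψ := φ.symm.trans φ' with hψdef
  set t : Γ := trz hΓ (Pi.single j 1) with htdef
  have h1 : ψ t = φ' (φ.symm t) := rfl
  have h2 := image_tl hΓ φ.symm t (trz_lin hΓ _)
  have hlin := lin_image_one hΓ φ.symm (trz_lin hΓ (Pi.single j 1))
  have h3 := image_tl hΓ φ' (φ.symm t) hlin
  have e1 : ((ψ t : Γ) : Aff n).tr
      = (Dmat hΓ φ' * Dmat hΓ φ.symm) *ᵥ castZ (Pi.single j 1) := by
    rw [h1]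
    have e2 : ((φ' (φ.symm t) : Γ) : Aff n).tr
        = Dmat hΓ φ' *ᵥ ((φ.symm t : Γ) : Aff n).tr := congrArg Aff.tr h3
    have e3 : ((φ.symm t : Γ) : Aff n).tr
        = Dmat hΓ φ.symm *ᵥ castZ (Pi.single j 1) := congrArg Aff.tr h2
    rw [e2, e3, Matrix.mulVec_mulVec]
  rw [hDD, Dmat_mul_symm hΓ φ] at e1
  rw [Matrix.one_mulVec, castZ_single] at e1
  show ((ψ t : Γ) : Aff n).tr i = (1 : Matrix (Fin n) (Fin n) ℝ) i j
  rw [e1]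
  simp [Matrix.one_apply, Pi.single_apply, eq_comm]

omit hΓ in
lemma reidemeister_eq_of_inner {G : Type*} [Group G] (φ' φ : G →* G) (g : G)
    (h : ∀ x, φ' x = g * φ x * g⁻¹) :
    reidemeisterNumber φ' = reidemeisterNumber φ := by
  unfold reidemeisterNumber
  apply ENat.card_congr
  apply Quot.congr (Equiv.mulRight g)
  intro a b
  constructor
  · rintro ⟨k, hk⟩
    refine ⟨k, ?_⟩
    show a * g = k * (b * g) * (φ k)⁻¹
    rw [hk, h k]
    group
  · rintro ⟨k, hk⟩
    refine ⟨k, ?_⟩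
    have h2 : a = k * (b * g) * (φ k)⁻¹ * g⁻¹ := by
      have h3 : a * g = k * (b * g) * (φ k)⁻¹ := hk
      rw [← h3]
      group
    rw [h2, h k]
    group

omit hΓ in
lemma mk_castZ_mem_range {m : ℕ} (hm : 0 < m) (w : Fin n → ℤ) :
    (QuotientAddGroup.mk (castZ w) : (Fin n → ℝ) ⧸ mLat (n := n) m) ∈
      Set.range (fun t : Fin n → Fin m =>
        (QuotientAddGroup.mk (castZ (fun i => ((t i : ℕ) : ℤ)))
          : (Fin n → ℝ) ⧸ mLat (n := n) m)) := by
  have hmz : (0 : ℤ) < (m : ℤ) := by exact_mod_cast hm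
  refine ⟨fun i => ⟨(w i % (m : ℤ)).toNat, ?_⟩, ?_⟩
  · have h1 : 0 ≤ w i % (m : ℤ) := Int.emod_nonneg _ hmz.ne'
    have h2 : w i % (m : ℤ) < m := Int.emod_lt_of_pos _ hmz
    omega
  · show QuotientAddGroup.mk _ = QuotientAddGroup.mk _
    rw [QuotientAddGroup.eq]
    refine ⟨fun i => w i / (m : ℤ), ?_⟩
    funext i
    have h1 : 0 ≤ w i % (m : ℤ) := Int.emod_nonneg _ hmz.ne'
    have h3 : (((w i % (m : ℤ)).toNat : ℤ)) = w i % (m : ℤ) := Int.toNat_of_nonneg h1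
    have h5 : (-(((w i % (m : ℤ)).toNat : ℤ)) + w i : ℤ) = (m : ℤ) * (w i / (m : ℤ)) := by
      rw [h3]
      linarith [Int.emod_add_mul_ediv (w i) (m : ℤ)]
    show -(((((w i % (m : ℤ)).toNat : ℕ) : ℤ) : ℝ)) + ((w i : ℤ) : ℝ)
        = ((m : ℕ) : ℝ) * (((w i / (m : ℤ)) : ℤ) : ℝ)
    exact_mod_cast congrArg (fun z : ℤ => (z : ℝ)) h5

omit hΓ in
lemma finite_range_aux {α β δ : Type*} (f : α → δ) (g : α → β)
    (h : ∀ a b : α, g a = g b → f a = f b) (hg : (Set.range g).Finite) :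
    (Set.range f).Finite := by
  have hfin : Finite ↥(Set.range g) := hg.to_subtype
  have hsub : Set.range f ⊆ Set.range (fun t : Set.range g => f t.2.choose) := by
    rintro x ⟨a, rfl⟩
    refine ⟨⟨g a, ⟨a, rfl⟩⟩, ?_⟩
    exact h _ _ (Exists.choose_spec (⟨a, rfl⟩ : ∃ y, g y = g a))
  exact (Set.finite_range _).subset hsub

/-- Reidemeister numbers agree if the invariants agree. -/
lemma R_eq_of_inv_eq (φ φ' : Γ ≃* Γ) (hD : DGL hΓ φ = DGL hΓ φ')
    (hU : (QuotientAddGroup.mk (uSum hΓ φ) : (Fin n → ℝ) ⧸ mLat (n := n) (mF Γ))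
        = QuotientAddGroup.mk (uSum hΓ φ')) :
    reidemeisterNumber (φ : Γ →* Γ) = reidemeisterNumber (φ' : Γ →* Γ) := by
  set ψ := φ.symm.trans φ' with hψdef
  have hψ : ∀ x, ψ (φ x) = φ' x := fun x => by
    rw [hψdef]; simp [MulEquiv.trans_apply]
  have hDD : Dmat hΓ φ' = Dmat hΓ φ := by
    have := congrArg Units.val hD
    rw [DGL_val, DGL_val] at this
    exact this.symm
  have hD1 : Dmat hΓ ψ = 1 := Dmat_comp_one hΓ hDD
  have hdiff : uSum hΓ φ' - uSum hΓ φ = ∑ A ∈ SF hΓ, cfun ψ (φ (crep A)) :=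
    Zsum_eq hΓ φ φ' ψ hψ
  have hre : ∑ A ∈ SF hΓ, cfun ψ (φ (crep A)) = Zsum hΓ ψ := by
    have heach : ∀ A ∈ SF hΓ, cfun ψ (φ (crep A))
        = cfun ψ (crep (DGL hΓ φ * A * (DGL hΓ φ)⁻¹)) := by
      intro A hA
      apply cfun_dep hΓ hD1
      rw [lin_conj hΓ φ (crep A), crep_lin ((mem_SF hΓ).mp hA),
        crep_lin ((DGL_normalizes hΓ φ A).mp ((mem_SF hΓ).mp hA))]
    rw [Finset.sum_congr rfl heach, Zsum]
    refine Finset.sum_bij' (fun A _ => DGL hΓ φ * A * (DGL hΓ φ)⁻¹)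
      (fun B _ => (DGL hΓ φ)⁻¹ * B * ((DGL hΓ φ)⁻¹)⁻¹) ?_ ?_ ?_ ?_ ?_
    · intro A hA
      exact (mem_SF hΓ).mpr ((DGL_normalizes hΓ φ A).mp ((mem_SF hΓ).mp hA))
    · intro B hB
      have h2 : DGL hΓ φ * ((DGL hΓ φ)⁻¹ * B * ((DGL hΓ φ)⁻¹)⁻¹) * (DGL hΓ φ)⁻¹ = B := by
        group
      refine (mem_SF hΓ).mpr ((DGL_normalizes hΓ φ _).mpr ?_)
      rw [h2]
      exact (mem_SF hΓ).mp hB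
    · intro A _; group
    · intro B _; group
    · intro A _; rfl
  obtain ⟨w, hw⟩ := Zsum_int hΓ hD1
  have hmem : uSum hΓ φ' - uSum hΓ φ ∈ mLat (n := n) (mF Γ) := by
    have h1 := QuotientAddGroup.eq_iff_sub_mem.mp hU
    have h2 := (mLat (n := n) (mF Γ)).neg_mem h1
    rwa [neg_sub] at h2
  rw [hdiff, hre, hw] at hmem
  obtain ⟨u, hu⟩ := hmem
  have hcob : ∀ x : Γ, cfun ψ x
      = castZ u - ((x : Aff n).lin : Matrix (Fin n) (Fin n) ℝ) *ᵥ castZ u := by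
    intro x
    have hk := key_averaging hΓ hD1 x
    rw [hw, hu] at hk
    rw [Matrix.mulVec_smul, ← smul_sub] at hk
    exact smul_right_injective _ (mF_ne_zero hΓ) hk
  have hconj := kernel_inner hΓ hD1 u hcob
  refine (reidemeister_eq_of_inner (φ' : Γ →* Γ) (φ : Γ →* Γ) (trz hΓ u) ?_).symm
  intro x
  show φ' x = trz hΓ u * φ x * (trz hΓ u)⁻¹
  rw [← hψ x]
  exact hconj (φ x)

lemma fiber_finite (D : GL (Fin n) ℝ) :
    {q : (Fin n → ℝ) ⧸ mLat (n := n) (mF Γ) |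
      ∃ φ : Γ ≃* Γ, DGL hΓ φ = D ∧ QuotientAddGroup.mk (uSum hΓ φ) = q}.Finite := by
  by_cases hne : ∃ φ0 : Γ ≃* Γ, DGL hΓ φ0 = D
  · obtain ⟨φ0, hφ0⟩ := hne
    have hsub : {q : (Fin n → ℝ) ⧸ mLat (n := n) (mF Γ) |
        ∃ φ : Γ ≃* Γ, DGL hΓ φ = D ∧ QuotientAddGroup.mk (uSum hΓ φ) = q}
        ⊆ (fun q => (QuotientAddGroup.mk (uSum hΓ φ0)
            : (Fin n → ℝ) ⧸ mLat (n := n) (mF Γ)) + q) ''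
          (Set.range (fun t : Fin n → Fin (mF Γ) =>
            (QuotientAddGroup.mk (castZ (fun i => ((t i : ℕ) : ℤ)))
              : (Fin n → ℝ) ⧸ mLat (n := n) (mF Γ)))) := by
      rintro q ⟨φ, hDφ, rfl⟩
      set ψ := φ0.symm.trans φ with hψdef
      have hψ : ∀ x, ψ (φ0 x) = φ x := fun x => by
        rw [hψdef]; simp [MulEquiv.trans_apply]
      have hDD : Dmat hΓ φ = Dmat hΓ φ0 := by
        have := congrArg Units.val (hDφ.trans hφ0.symm)
        rw [DGL_val, DGL_val] at this
        exact this
      have hD1 : Dmat hΓ ψ = 1 := Dmat_comp_one hΓ hDD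
      have hdiff : uSum hΓ φ - uSum hΓ φ0 = ∑ A ∈ SF hΓ, cfun ψ (φ0 (crep A)) :=
        Zsum_eq hΓ φ0 φ ψ hψ
      have hint : (∑ A ∈ SF hΓ, cfun ψ (φ0 (crep A))) ∈ Lat (n := n) :=
        sum_mem (fun A _ => cfun_int hΓ hD1 _)
      obtain ⟨w, hw⟩ := hint
      have husum : uSum hΓ φ = uSum hΓ φ0 + castZ w := by
        rw [← hw, ← hdiff]; abel
      obtain ⟨t, ht⟩ := mk_castZ_mem_range (n := n) (mF_pos hΓ) w
      refine ⟨_, ⟨t, rfl⟩, ?_⟩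
      rw [husum, QuotientAddGroup.mk_add, ht]
    exact ((Set.finite_range _).image _).subset hsub
  · apply Set.Finite.subset (Set.finite_empty)
    rintro q ⟨φ, hDφ, _⟩
    exact absurd ⟨φ, hDφ⟩ hne

lemma range_iota_finite
    (hN : {D : GL (Fin n) ℝ | IsIntegralGL D ∧
      ∀ A : GL (Fin n) ℝ, A ∈ holonomy Γ ↔ D * A * D⁻¹ ∈ holonomy Γ}.Finite) :
    (Set.range (fun φ : Γ ≃* Γ =>
      (DGL hΓ φ, (QuotientAddGroup.mk (uSum hΓ φ)
        : (Fin n → ℝ) ⧸ mLat (n := n) (mF Γ))))).Finite := by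
  have hsub : Set.range (fun φ : Γ ≃* Γ =>
      (DGL hΓ φ, (QuotientAddGroup.mk (uSum hΓ φ)
        : (Fin n → ℝ) ⧸ mLat (n := n) (mF Γ))))
      ⊆ ⋃ D ∈ {D : GL (Fin n) ℝ | IsIntegralGL D ∧
          ∀ A : GL (Fin n) ℝ, A ∈ holonomy Γ ↔ D * A * D⁻¹ ∈ holonomy Γ},
          (fun q => (D, q)) ''
            {q : (Fin n → ℝ) ⧸ mLat (n := n) (mF Γ) |
              ∃ φ : Γ ≃* Γ, DGL hΓ φ = D ∧ QuotientAddGroup.mk (uSum hΓ φ) = q} := by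
    rintro p ⟨φ, rfl⟩
    have hDmem : DGL hΓ φ ∈ {D : GL (Fin n) ℝ | IsIntegralGL D ∧
        ∀ A : GL (Fin n) ℝ, A ∈ holonomy Γ ↔ D * A * D⁻¹ ∈ holonomy Γ} :=
      ⟨DGL_integral hΓ φ, DGL_normalizes hΓ φ⟩
    apply Set.mem_biUnion hDmem
    exact ⟨_, ⟨φ, rfl, rfl⟩, rfl⟩
  refine Set.Finite.subset ?_ hsub
  exact hN.biUnion (fun D _ => (fiber_finite hΓ D).image _)

end Crys

/-- If the normaliser of the holonomy group `F` of a crystallographic group `Γ` in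
`GLₙ(ℤ)` is finite, then the Reidemeister spectrum of `Γ` is finite. -/
theorem stmt11 {n : ℕ} (Γ : Subgroup (Aff n)) (hΓ : IsCrystallographic Γ)
    (hN : {D : GL (Fin n) ℝ | IsIntegralGL D ∧
      ∀ A : GL (Fin n) ℝ, A ∈ holonomy Γ ↔ D * A * D⁻¹ ∈ holonomy Γ}.Finite) :
    (reidemeisterSpectrum ↥Γ).Finite := by
  have hspec : reidemeisterSpectrum ↥Γ
      = Set.range (fun φ : ↥Γ ≃* ↥Γ => reidemeisterNumber (φ : ↥Γ →* ↥Γ)) := rfl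
  rw [hspec]
  exact Crys.finite_range_aux _
    (fun φ : ↥Γ ≃* ↥Γ => (Crys.DGL hΓ φ, (QuotientAddGroup.mk (Crys.uSum hΓ φ)
      : (Fin n → ℝ) ⧸ Crys.mLat (n := n) (Crys.mF Γ))))
    (fun a b hab => Crys.R_eq_of_inv_eq hΓ a b
      (congrArg Prod.fst hab) (congrArg Prod.snd hab))
    (Crys.range_iota_finite hΓ hN)
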